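/- Let A and B be n×n positive semidefinite matrices with nonnegative entries, trace 1, and diagonal entries all equal to 1/n. Then for α > 1, S_α((A∘B)/tr(A∘B)) ≥ max(S_α(A), S_α(B)). -/

import Mathlib

open Matrix BigOperators

/-- Matrix-based Rényi α-order entropy: defined via the eigenvalues when the
matrix is Hermitian (junk value 0 otherwise). -/
noncomputable def renyiS {n : ℕ} (α : ℝ) (A : Matrix (Fin n) (Fin n) ℝ) : ℝ :=
  if hA : A.IsHermitian then
    (1 / (1 - α)) * Real.logb 2 (∑ i, (hA.eigenvalues i) ^ α)
  else 0

namespace RenyiAux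

open Finset

lemma trace_eq_sum_eigenvalues {n : ℕ} {A : Matrix (Fin n) (Fin n) ℝ} (hA : A.IsHermitian) :
    A.trace = ∑ i, hA.eigenvalues i := by
  conv_lhs => rw [hA.spectral_theorem, Unitary.conjStarAlgAut_apply]
  rw [Matrix.trace_mul_cycle]
  simp [Matrix.trace_diagonal, RCLike.ofReal_real_eq_id]

lemma hadamard_decomp {n : ℕ} (A : Matrix (Fin n) (Fin n) ℝ) (C : Matrix (Fin n) (Fin n) ℝ)
    {B : Matrix (Fin n) (Fin n) ℝ} (hC : B = Cᴴ * C) :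
    Matrix.hadamard A B = ∑ k, diagonal (C k) * A * diagonal (C k) := by
  ext p q
  rw [Matrix.sum_apply]
  have hB : B p q = ∑ k, C k p * C k q := by
    simp [hC, Matrix.mul_apply, Matrix.conjTranspose_apply]
  simp only [Matrix.hadamard_apply, hB, Finset.mul_sum]
  refine Finset.sum_congr rfl fun k _ => ?_
  rw [Matrix.mul_diagonal, Matrix.diagonal_mul]
  ring

open scoped MatrixOrder in
lemma exists_C {n : ℕ} {B : Matrix (Fin n) (Fin n) ℝ} (hB : B.PosSemidef) :
    ∃ C : Matrix (Fin n) (Fin n) ℝ, B = Cᴴ * C := by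
  classical
  obtain ⟨X, hX, -, hXB⟩ := CFC.exists_sqrt_of_isSelfAdjoint_of_quasispectrumRestricts
    hB.isHermitian (QuasispectrumRestricts.nnreal_of_nonneg hB.nonneg)
  refine ⟨X, ?_⟩
  rw [← hXB, ← Matrix.star_eq_conjTranspose, hX.star_eq]

lemma psd_smul {n : ℕ} {X : Matrix (Fin n) (Fin n) ℝ} {c : ℝ} (hc : 0 ≤ c)
    (hX : X.PosSemidef) : (c • X).PosSemidef := by
  refine ⟨?_, fun x => ?_⟩
  · show (c • X)ᴴ = c • X
    rw [Matrix.conjTranspose_smul, star_trivial, hX.1.eq]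
  · exact (hX.smul hc).2 x

lemma hadamard_psd {n : ℕ} {A B : Matrix (Fin n) (Fin n) ℝ} (hA : A.PosSemidef)
    (hB : B.PosSemidef) : (Matrix.hadamard A B).PosSemidef := by
  obtain ⟨C, hC⟩ := exists_C hB
  rw [hadamard_decomp A C hC]
  refine Finset.sum_induction _ _ (fun a b ha hb => ha.add hb)
    ⟨Matrix.isHermitian_zero, fun x => by simp⟩ (fun k _ => ?_)
  have h := hA.mul_mul_conjTranspose_same (diagonal (C k))
  have hd : (diagonal (C k))ᴴ = diagonal (C k) := by
    simp [Matrix.diagonal_conjTranspose]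
  rwa [hd] at h

lemma key {n : ℕ} (hn : 0 < n) {A B M : Matrix (Fin n) (Fin n) ℝ}
    (hA : A.PosSemidef) (hB : B.PosSemidef) (hM : M.PosSemidef)
    (hMdef : M = (n : ℝ) • Matrix.hadamard A B)
    (hBd : ∀ i, B i i = 1 / n) {α : ℝ} (hα : 1 < α) :
    ∑ j, (hM.1.eigenvalues j) ^ α ≤ ∑ i, (hA.1.eigenvalues i) ^ α := by
  have hn' : (n : ℝ) ≠ 0 := Nat.cast_ne_zero.mpr hn.ne'
  obtain ⟨C, hC⟩ := exists_C hB
  set U : Matrix (Fin n) (Fin n) ℝ := ↑(hA.1.eigenvectorUnitary) with hU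
  set V : Matrix (Fin n) (Fin n) ℝ := ↑(hM.1.eigenvectorUnitary) with hV
  set lam := hA.1.eigenvalues with hlam
  set mu := hM.1.eigenvalues with hmu0
  have hUU : star U * U = 1 := Matrix.mem_unitaryGroup_iff'.mp (hA.1.eigenvectorUnitary).2
  have hUU' : U * star U = 1 := Matrix.mem_unitaryGroup_iff.mp (hA.1.eigenvectorUnitary).2
  have hVV : star V * V = 1 := Matrix.mem_unitaryGroup_iff'.mp (hM.1.eigenvectorUnitary).2
  have hVV' : V * star V = 1 := Matrix.mem_unitaryGroup_iff.mp (hM.1.eigenvectorUnitary).2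
  set D : Fin n → Matrix (Fin n) (Fin n) ℝ := fun k => diagonal (C k) with hD
  have hDstar : ∀ k, star (D k) = D k := by
    intro k
    simp [hD, Matrix.star_eq_conjTranspose, Matrix.diagonal_conjTranspose]
  have hDD : ∑ k, D k * D k = ((1 : ℝ)/n) • (1 : Matrix (Fin n) (Fin n) ℝ) := by
    have hBpp : ∀ p, ∑ k, C k p * C k p = 1 / n := by
      intro p
      rw [← hBd p, hC]
      simp [Matrix.mul_apply, Matrix.conjTranspose_apply]
    ext p q
    rw [Matrix.sum_apply]
    by_cases hpq : p = q
    · subst hpq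
      simp [hD, Matrix.diagonal_mul_diagonal, Matrix.diagonal_apply_eq, hBpp p,
        Matrix.smul_apply, Matrix.one_apply_eq]
    · simp [hD, Matrix.diagonal_mul_diagonal, Matrix.diagonal_apply_ne _ hpq,
        Matrix.smul_apply, Matrix.one_apply_ne hpq]
  have hAspec : A = U * diagonal lam * star U := by
    have h := hA.1.spectral_theorem
    rw [Unitary.conjStarAlgAut_apply] at h
    rwa [RCLike.ofReal_real_eq_id, Function.id_comp] at h
  have hMspec : star V * M * V = diagonal mu := by
    have h := hM.1.conjStarAlgAut_star_eigenvectorUnitary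
    rw [Unitary.conjStarAlgAut_star_apply] at h
    rwa [RCLike.ofReal_real_eq_id, Function.id_comp] at h
  set W : Fin n → Matrix (Fin n) (Fin n) ℝ := fun k => star U * D k * V with hW
  have hsW : ∀ k, star (W k) = star V * D k * U := by
    intro k
    simp only [hW]
    rw [Matrix.star_mul, Matrix.star_mul, hDstar, star_star, ← Matrix.mul_assoc]
  -- Fact A
  have factA : (n : ℝ) • ∑ k, star (W k) * diagonal lam * W k = diagonal mu := by
    have hAX : ∀ X : Matrix (Fin n) (Fin n) ℝ,
        U * (diagonal lam * (star U * X)) = A * X := by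
      intro X
      rw [hAspec]
      simp only [Matrix.mul_assoc]
    have h1 : ∀ k, star (W k) * diagonal lam * W k = star V * (D k * A * D k) * V := by
      intro k
      rw [hsW k]
      simp only [hW]
      calc star V * D k * U * diagonal lam * (star U * D k * V)
          = star V * (D k * (U * (diagonal lam * (star U * (D k * V))))) := by
            simp only [Matrix.mul_assoc]
        _ = star V * (D k * (A * (D k * V))) := by rw [hAX]
        _ = star V * (D k * A * D k) * V := by simp only [Matrix.mul_assoc]
    rw [Finset.sum_congr rfl fun k _ => h1 k]
    rw [← Finset.sum_mul, ← Finset.mul_sum, ← hadamard_decomp A C hC]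
    rw [hMdef] at hMspec
    rw [← hMspec, Matrix.mul_smul, Matrix.smul_mul]
  -- Fact B
  have factB : (n : ℝ) • ∑ k, star (W k) * W k = 1 := by
    have h1 : ∀ k, star (W k) * W k = star V * (D k * D k) * V := by
      intro k
      rw [hsW k]
      simp only [hW]
      calc star V * D k * U * (star U * D k * V)
          = star V * (D k * ((U * star U) * (D k * V))) := by
            simp only [Matrix.mul_assoc]
        _ = star V * (D k * (D k * V)) := by rw [hUU', Matrix.one_mul]
        _ = star V * (D k * D k) * V := by simp only [Matrix.mul_assoc]
    rw [Finset.sum_congr rfl fun k _ => h1 k, ← Finset.sum_mul, ← Finset.mul_sum, hDD]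
    rw [Matrix.mul_smul, Matrix.smul_mul, Matrix.mul_one, hVV, smul_smul,
      mul_one_div, div_self hn', one_smul]
  -- Fact C
  have factC : (n : ℝ) • ∑ k, W k * star (W k) = 1 := by
    have h1 : ∀ k, W k * star (W k) = star U * (D k * D k) * U := by
      intro k
      rw [hsW k]
      simp only [hW]
      calc star U * D k * V * (star V * D k * U)
          = star U * (D k * ((V * star V) * (D k * U))) := by
            simp only [Matrix.mul_assoc]
        _ = star U * (D k * (D k * U)) := by rw [hVV', Matrix.one_mul]
        _ = star U * (D k * D k) * U := by simp only [Matrix.mul_assoc]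
    rw [Finset.sum_congr rfl fun k _ => h1 k, ← Finset.sum_mul, ← Finset.mul_sum, hDD]
    rw [Matrix.mul_smul, Matrix.smul_mul, Matrix.mul_one, hUU, smul_smul,
      mul_one_div, div_self hn', one_smul]
  -- entrywise extraction
  have Edq : ∀ (X : Matrix (Fin n) (Fin n) ℝ) (d : Fin n → ℝ) (j),
      (star X * diagonal d * X) j j = ∑ i, d i * (X i j) ^ 2 := by
    intro X d j
    rw [Matrix.mul_apply]
    refine Finset.sum_congr rfl fun i _ => ?_
    rw [Matrix.mul_diagonal]
    simp only [Matrix.star_eq_conjTranspose, Matrix.conjTranspose_apply, star_trivial]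
    ring
  have E2 : ∀ (X : Matrix (Fin n) (Fin n) ℝ) (j),
      (star X * X) j j = ∑ i, (X i j) ^ 2 := by
    intro X j
    rw [Matrix.mul_apply]
    refine Finset.sum_congr rfl fun i _ => ?_
    simp only [Matrix.star_eq_conjTranspose, Matrix.conjTranspose_apply, star_trivial]
    ring
  have E3 : ∀ (X : Matrix (Fin n) (Fin n) ℝ) (i),
      (X * star X) i i = ∑ j, (X i j) ^ 2 := by
    intro X i
    rw [Matrix.mul_apply]
    refine Finset.sum_congr rfl fun j _ => ?_
    simp only [Matrix.star_eq_conjTranspose, Matrix.conjTranspose_apply, star_trivial]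
    ring
  set S : Fin n → Fin n → ℝ := fun j i => (n : ℝ) * ∑ k, (W k i j) ^ 2 with hSdef
  have hSnn : ∀ j i, 0 ≤ S j i := by
    intro j i
    have h0 : (0:ℝ) ≤ ∑ k, (W k i j) ^ 2 := Finset.sum_nonneg fun k _ => sq_nonneg _
    exact mul_nonneg (Nat.cast_nonneg n) h0
  have hmu : ∀ j, mu j = ∑ i, S j i * lam i := by
    intro j
    have h := congrFun (congrFun factA j) j
    rw [Matrix.smul_apply, Matrix.sum_apply, Matrix.diagonal_apply_eq] at h
    rw [Finset.sum_congr rfl (fun k _ => Edq (W k) lam j)] at h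
    rw [← h, smul_eq_mul, Finset.sum_comm, Finset.mul_sum]
    refine Finset.sum_congr rfl fun i _ => ?_
    simp only [hSdef]
    rw [← Finset.mul_sum]
    ring
  have hrow : ∀ j, ∑ i, S j i = 1 := by
    intro j
    have h := congrFun (congrFun factB j) j
    rw [Matrix.smul_apply, Matrix.sum_apply, Matrix.one_apply_eq] at h
    rw [Finset.sum_congr rfl (fun k _ => E2 (W k) j), smul_eq_mul] at h
    calc ∑ i, S j i = (n:ℝ) * ∑ i, ∑ k, (W k i j) ^ 2 := by rw [Finset.mul_sum]
      _ = (n:ℝ) * ∑ k, ∑ i, (W k i j) ^ 2 := by rw [Finset.sum_comm]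
      _ = 1 := h
  have hcol : ∀ i, ∑ j, S j i = 1 := by
    intro i
    have h := congrFun (congrFun factC i) i
    rw [Matrix.smul_apply, Matrix.sum_apply, Matrix.one_apply_eq] at h
    rw [Finset.sum_congr rfl (fun k _ => E3 (W k) i), smul_eq_mul] at h
    calc ∑ j, S j i = (n:ℝ) * ∑ j, ∑ k, (W k i j) ^ 2 := by rw [Finset.mul_sum]
      _ = (n:ℝ) * ∑ k, ∑ j, (W k i j) ^ 2 := by rw [Finset.sum_comm]
      _ = 1 := h
  have hlamnn : ∀ i, 0 ≤ lam i := fun i => hA.eigenvalues_nonneg i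
  calc ∑ j, mu j ^ α
      = ∑ j, (∑ i, S j i * lam i) ^ α := by
        refine Finset.sum_congr rfl fun j _ => ?_
        rw [hmu j]
    _ ≤ ∑ j, ∑ i, S j i * lam i ^ α := by
        refine Finset.sum_le_sum fun j _ => ?_
        exact Real.rpow_arith_mean_le_arith_mean_rpow univ (S j) lam
          (fun i _ => hSnn j i) (hrow j) (fun i _ => hlamnn i) hα.le
    _ = ∑ i, (∑ j, S j i) * lam i ^ α := by
        rw [Finset.sum_comm]
        exact Finset.sum_congr rfl fun i _ => (Finset.sum_mul _ _ _).symm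
    _ = ∑ i, lam i ^ α := by
        refine Finset.sum_congr rfl fun i _ => ?_
        rw [hcol i, one_mul]

lemma side {n : ℕ} (hn : 0 < n) {A B : Matrix (Fin n) (Fin n) ℝ}
    (hA : A.PosSemidef) (hB : B.PosSemidef) (hAtr : A.trace = 1)
    (hBd : ∀ i, B i i = 1 / n) {α : ℝ} (hα : 1 < α) :
    renyiS α A ≤ renyiS α (((Matrix.hadamard A B).trace)⁻¹ • Matrix.hadamard A B) := by
  have hn' : (n : ℝ) ≠ 0 := Nat.cast_ne_zero.mpr hn.ne'
  have htrA : ∑ i, A i i = 1 := hAtr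
  have htr : (Matrix.hadamard A B).trace = 1 / n := by
    rw [Matrix.trace]
    simp only [Matrix.diag_apply, Matrix.hadamard_apply, hBd]
    rw [← Finset.sum_mul, htrA, one_mul]
  have hMeq : ((Matrix.hadamard A B).trace)⁻¹ • Matrix.hadamard A B
      = (n : ℝ) • Matrix.hadamard A B := by
    rw [htr, one_div, inv_inv]
  have hMpsd : ((n : ℝ) • Matrix.hadamard A B).PosSemidef :=
    psd_smul (Nat.cast_nonneg n) (hadamard_psd hA hB)
  rw [hMeq, renyiS, renyiS, dif_pos hA.1, dif_pos hMpsd.1]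
  have hAsum : ∑ i, hA.1.eigenvalues i = 1 := by
    rw [← trace_eq_sum_eigenvalues hA.1, hAtr]
  have hMsum : ∑ j, hMpsd.1.eigenvalues j = 1 := by
    rw [← trace_eq_sum_eigenvalues hMpsd.1, Matrix.trace_smul, htr, smul_eq_mul,
      mul_one_div, div_self hn']
  have exA : ∃ i, 0 < hA.1.eigenvalues i := by
    obtain ⟨i, _, hi⟩ := Finset.exists_lt_of_sum_lt (f := fun _ : Fin n => (0:ℝ))
      (g := hA.1.eigenvalues) (by rw [hAsum]; simp)
    exact ⟨i, hi⟩
  have exM : ∃ j, 0 < hMpsd.1.eigenvalues j := by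
    obtain ⟨j, _, hj⟩ := Finset.exists_lt_of_sum_lt (f := fun _ : Fin n => (0:ℝ))
      (g := hMpsd.1.eigenvalues) (by rw [hMsum]; simp)
    exact ⟨j, hj⟩
  obtain ⟨i0, hi0⟩ := exA
  obtain ⟨j0, hj0⟩ := exM
  have hSA : 0 < ∑ i, hA.1.eigenvalues i ^ α :=
    Finset.sum_pos' (fun i _ => Real.rpow_nonneg (hA.eigenvalues_nonneg i) α)
      ⟨i0, Finset.mem_univ i0, Real.rpow_pos_of_pos hi0 α⟩
  have hSM : 0 < ∑ j, hMpsd.1.eigenvalues j ^ α :=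
    Finset.sum_pos' (fun j _ => Real.rpow_nonneg (hMpsd.eigenvalues_nonneg j) α)
      ⟨j0, Finset.mem_univ j0, Real.rpow_pos_of_pos hj0 α⟩
  have hkey := key hn hA hB hMpsd rfl hBd hα
  have hlog : Real.logb 2 (∑ j, hMpsd.1.eigenvalues j ^ α)
      ≤ Real.logb 2 (∑ i, hA.1.eigenvalues i ^ α) :=
    Real.logb_le_logb_of_le one_lt_two hSM hkey
  have hcoef : 1 / (1 - α) ≤ 0 := by
    have h1 : 1 - α < 0 := by linarith
    exact le_of_lt (div_neg_of_pos_of_neg one_pos h1)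
  exact mul_le_mul_of_nonpos_left hlog hcoef

end RenyiAux

/-- the joint matrix-based Rényi entropy is at least each
marginal entropy. -/
theorem renyiS_joint_ge_max {n : ℕ} {A B : Matrix (Fin n) (Fin n) ℝ}
    (hA : A.PosSemidef) (hB : B.PosSemidef)
    (hApos : ∀ i j, 0 ≤ A i j) (hBpos : ∀ i j, 0 ≤ B i j)
    (hAtr : A.trace = 1) (hBtr : B.trace = 1)
    (hAd : ∀ i, A i i = 1 / n) (hBd : ∀ i, B i i = 1 / n)
    {α : ℝ} (hα : 1 < α) :
    max (renyiS α A) (renyiS α B) ≤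
      renyiS α (((Matrix.hadamard A B).trace)⁻¹ • Matrix.hadamard A B) := by
  rcases Nat.eq_zero_or_pos n with rfl | hn
  · exfalso
    simp [Matrix.trace] at hAtr
  · refine max_le (RenyiAux.side hn hA hB hAtr hBd hα) ?_
    rw [Matrix.hadamard_comm]
    exact RenyiAux.side hn hB hA hBtr hAd hα
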